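/- arXiv:1603.01659 — 3 statements merged into one kernel-verified Lean document; each statement's English description precedes it below -/
import Mathlib

section
/- Let β > 0, ρ > 0, P > 0, b ∈ ℝ^n. The minimizer of f(v) = β‖v‖₂ + (ρ/2)‖v - b‖₂² subject to ‖v‖₂² ≤ P is: v* = 0 if ‖b‖₂ ≤ β/ρ; v* = ((ρ‖b‖₂ - β)/(ρ‖b‖₂))·b if β/ρ < ‖b‖₂ < β/ρ + √P; and v* = (√P/‖b‖₂)·b otherwise. -/
open scoped Classical

set_option maxHeartbeats 1000000

theorem constrained_group_soft_thresholding (n : ℕ) (hn : 1 ≤ n)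
    (β ρ P : ℝ) (hβ : 0 < β) (hρ : 0 < ρ) (hP : 0 < P)
    (b : EuclideanSpace ℝ (Fin n))
    (f : EuclideanSpace ℝ (Fin n) → ℝ)
    (hf : ∀ v, f v = β * ‖v‖ + (ρ / 2) * ‖v - b‖ ^ 2)
    (vstar : EuclideanSpace ℝ (Fin n))
    (hvstar : vstar =
      if ‖b‖ ≤ β / ρ then 0
      else if ‖b‖ < β / ρ + Real.sqrt P then ((ρ * ‖b‖ - β) / (ρ * ‖b‖)) • b
      else (Real.sqrt P / ‖b‖) • b) :
    ‖vstar‖ ^ 2 ≤ P ∧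
      ∀ v : EuclideanSpace ℝ (Fin n), ‖v‖ ^ 2 ≤ P → f vstar ≤ f v := by
  have hb0 : (0:ℝ) ≤ ‖b‖ := norm_nonneg b
  have hsP : (0:ℝ) < Real.sqrt P := Real.sqrt_pos.mpr hP
  have hsP2 : Real.sqrt P ^ 2 = P := Real.sq_sqrt hP.le
  -- lower bound along norms
  have key : ∀ v : EuclideanSpace ℝ (Fin n),
      β * ‖v‖ + (ρ/2) * (‖v‖ - ‖b‖)^2 ≤ f v := by
    intro v
    rw [hf]
    have h1 : |‖v‖ - ‖b‖| ≤ ‖v - b‖ := abs_norm_sub_norm_le v b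
    have h2 : (‖v‖ - ‖b‖)^2 ≤ ‖v - b‖^2 := by
      rw [← sq_abs]
      exact pow_le_pow_left₀ (abs_nonneg _) h1 2
    nlinarith
  -- value along the ray t • b, 0 ≤ t ≤ 1
  have fscale : ∀ t : ℝ, 0 ≤ t → t ≤ 1 →
      f (t • b) = β * (t * ‖b‖) + (ρ/2) * (t * ‖b‖ - ‖b‖)^2 := by
    intro t ht ht1
    rw [hf]
    have h1 : ‖t • b‖ = t * ‖b‖ := by
      rw [norm_smul, Real.norm_eq_abs, abs_of_nonneg ht]
    have h2 : ‖t • b - b‖ = (1 - t) * ‖b‖ := by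
      have e : t • b - b = (t - 1) • b := by
        rw [sub_smul, one_smul]
      rw [e, norm_smul, Real.norm_eq_abs, abs_of_nonpos (by linarith), neg_sub]
    rw [h1, h2]
    ring
  by_cases h1 : ‖b‖ ≤ β / ρ
  · -- case 1 : vstar = 0
    rw [if_pos h1] at hvstar
    subst hvstar
    have hρB : ρ * ‖b‖ ≤ β := by
      have := (le_div_iff₀ hρ).mp h1
      linarith
    constructor
    · simp [hP.le]
    · intro v hv
      have hk := key v
      have hv0 : (0:ℝ) ≤ ‖v‖ := norm_nonneg v
      have h0 : f 0 = (ρ/2) * ‖b‖^2 := by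
        rw [hf]; simp
      rw [h0]
      nlinarith [mul_nonneg hv0 (sub_nonneg.mpr hρB)]
  · -- ‖b‖ > β/ρ
    push_neg at h1
    have hB : 0 < ‖b‖ := lt_trans (div_pos hβ hρ) h1
    have hρB : β < ρ * ‖b‖ := by
      rw [div_lt_iff₀ hρ] at h1
      linarith [h1]
    by_cases h2 : ‖b‖ < β / ρ + Real.sqrt P
    · -- case 2 : interior
      rw [if_neg (not_le.mpr h1), if_pos h2] at hvstar
      set t : ℝ := (ρ * ‖b‖ - β) / (ρ * ‖b‖) with htdef
      have hρBpos : 0 < ρ * ‖b‖ := by positivity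
      have ht0 : 0 ≤ t := div_nonneg (by linarith) hρBpos.le
      have ht1 : t ≤ 1 := by
        rw [div_le_one hρBpos]; linarith
      have hr : t * ‖b‖ = ‖b‖ - β / ρ := by
        rw [htdef]
        field_simp
      have hrlt : ‖b‖ - β / ρ < Real.sqrt P := by linarith
      have hrpos : 0 < ‖b‖ - β / ρ := by
        have := (div_lt_iff₀ hρ).mpr (by linarith : β < ‖b‖ * ρ)
        linarith
      have hnorm : ‖vstar‖ = t * ‖b‖ := by
        rw [hvstar, norm_smul, Real.norm_eq_abs, abs_of_nonneg ht0]
      constructor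
      · rw [hnorm, hr]
        nlinarith
      · intro v hv
        have hk := key v
        have hfv : f vstar = β * (t * ‖b‖) + (ρ/2) * (t * ‖b‖ - ‖b‖)^2 := by
          rw [hvstar]; exact fscale t ht0 ht1
        have hv0 : (0:ℝ) ≤ ‖v‖ := norm_nonneg v
        rw [hfv, hr]
        have hβρ : ρ * (β / ρ) = β := by field_simp
        nlinarith [sq_nonneg (‖v‖ - (‖b‖ - β / ρ))]
    · -- case 3 : boundary
      rw [if_neg (not_le.mpr h1), if_neg h2] at hvstar
      push_neg at h2
      set t : ℝ := Real.sqrt P / ‖b‖ with htdef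
      have ht0 : 0 ≤ t := div_nonneg hsP.le hB.le
      have hsPB : Real.sqrt P ≤ ‖b‖ := by
        have : 0 < β / ρ := div_pos hβ hρ
        linarith
      have ht1 : t ≤ 1 := by
        rw [div_le_one hB]; exact hsPB
      have hr : t * ‖b‖ = Real.sqrt P := by
        rw [htdef, div_mul_cancel₀ _ (ne_of_gt hB)]
      have hnorm : ‖vstar‖ = t * ‖b‖ := by
        rw [hvstar, norm_smul, Real.norm_eq_abs, abs_of_nonneg ht0]
      constructor
      · rw [hnorm, hr, hsP2]
      · intro v hv
        have hk := key v
        have hfv : f vstar = β * (t * ‖b‖) + (ρ/2) * (t * ‖b‖ - ‖b‖)^2 := by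
          rw [hvstar]; exact fscale t ht0 ht1
        have hv0 : (0:ℝ) ≤ ‖v‖ := norm_nonneg v
        have hvle : ‖v‖ ≤ Real.sqrt P := by
          nlinarith
        have hc : β + ρ * Real.sqrt P ≤ ρ * ‖b‖ := by
          have h3 := mul_le_mul_of_nonneg_left h2 hρ.le
          have h4 : ρ * (β / ρ) = β := by field_simp
          rw [mul_add, h4] at h3
          linarith
        rw [hfv, hr]
        nlinarith [mul_nonneg (sub_nonneg.mpr hvle)
            (by linarith : (0:ℝ) ≤ ρ * ‖b‖ - β - ρ * Real.sqrt P),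
          mul_nonneg hρ.le (sq_nonneg (Real.sqrt P - ‖v‖))]
end

section
/- For nonnegative sequences Q_i, A_i, μ_i (i = 1..I) with queue dynamics Q_i(t+1) = max(Q_i(t) − μ_i(t), 0) + A_i(t), the Lyapunov drift satisfies Δ(Q(t)) ≤ B − ∑_{i=1}^I Q_i(t)·E[μ_i(t) − A_i(t) | Q(t)], where B ≥ (1/2)∑_{i=1}^I E[A_i(t)² + μ_i(t)² | Q(t)]. -/
open MeasureTheory

lemma pointwise_drift (a b c : ℝ) (ha : 0 ≤ a) (hb : 0 ≤ b) (hc : 0 ≤ c) :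
    (max (a - b) 0 + c) ^ 2 ≤ a ^ 2 + (c ^ 2 + b ^ 2) - 2 * (a * (b - c)) := by
  have hm : max (a - b) 0 ≤ a := by
    apply max_le <;> linarith
  have hm0 : 0 ≤ max (a - b) 0 := le_max_right _ _
  have hmsq : (max (a - b) 0) ^ 2 ≤ (a - b) ^ 2 := by
    rcases le_or_gt (a - b) 0 with h | h
    · rw [max_eq_right h]
      simpa using sq_nonneg (a - b)
    · rw [max_eq_left h.le]
  nlinarith [mul_le_mul_of_nonneg_right hm hc]

theorem lyapunov_drift_bound {Ω : Type*} [MeasurableSpace Ω]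
    (P : Measure Ω) [IsProbabilityMeasure P]
    (I : ℕ) (Q A μ : ℕ → Ω → Fin I → ℝ) (t : ℕ)
    (hQnn : ∀ t ω i, 0 ≤ Q t ω i)
    (hAnn : ∀ t ω i, 0 ≤ A t ω i)
    (hμnn : ∀ t ω i, 0 ≤ μ t ω i)
    (hdyn : ∀ t ω i, Q (t + 1) ω i = max (Q t ω i - μ t ω i) 0 + A t ω i)
    (hLint : ∀ s, Integrable (fun ω => (1 / 2) * ∑ i, (Q s ω i) ^ 2) P)
    (hsqint : ∀ i : Fin I, Integrable (fun ω => (A t ω i) ^ 2 + (μ t ω i) ^ 2) P)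
    (hcrossint : ∀ i : Fin I, Integrable (fun ω => Q t ω i * (μ t ω i - A t ω i)) P)
    (B : ℝ)
    (hB : (1 / 2) * ∑ i, ∫ ω, ((A t ω i) ^ 2 + (μ t ω i) ^ 2) ∂P ≤ B) :
    (∫ ω, ((1 / 2) * ∑ i, (Q (t + 1) ω i) ^ 2 - (1 / 2) * ∑ i, (Q t ω i) ^ 2) ∂P)
      ≤ B - ∑ i, ∫ ω, Q t ω i * (μ t ω i - A t ω i) ∂P := by
  have hint : ∀ i : Fin I, Integrable (fun ω =>
      (1 / 2) * ((A t ω i) ^ 2 + (μ t ω i) ^ 2) - Q t ω i * (μ t ω i - A t ω i)) P :=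
    fun i => ((hsqint i).const_mul _).sub (hcrossint i)
  have hgint : Integrable (fun ω => ∑ i, ((1 / 2) * ((A t ω i) ^ 2 + (μ t ω i) ^ 2)
      - Q t ω i * (μ t ω i - A t ω i))) P :=
    integrable_finset_sum _ (fun i _ => hint i)
  have hfint : Integrable (fun ω => (1 / 2) * ∑ i, (Q (t + 1) ω i) ^ 2
      - (1 / 2) * ∑ i, (Q t ω i) ^ 2) P := (hLint (t + 1)).sub (hLint t)
  have hpt : ∀ ω, (1 / 2) * ∑ i, (Q (t + 1) ω i) ^ 2 - (1 / 2) * ∑ i, (Q t ω i) ^ 2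
      ≤ ∑ i, ((1 / 2) * ((A t ω i) ^ 2 + (μ t ω i) ^ 2)
        - Q t ω i * (μ t ω i - A t ω i)) := by
    intro ω
    rw [Finset.mul_sum, Finset.mul_sum, ← Finset.sum_sub_distrib]
    apply Finset.sum_le_sum
    intro i _
    have := pointwise_drift (Q t ω i) (μ t ω i) (A t ω i)
      (hQnn t ω i) (hμnn t ω i) (hAnn t ω i)
    rw [hdyn t ω i]
    nlinarith [this]
  have h1 := integral_mono hfint hgint hpt
  have h2 : (∫ ω, ∑ i, ((1 / 2) * ((A t ω i) ^ 2 + (μ t ω i) ^ 2)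
      - Q t ω i * (μ t ω i - A t ω i)) ∂P)
      = (1 / 2) * ∑ i, ∫ ω, ((A t ω i) ^ 2 + (μ t ω i) ^ 2) ∂P
      - ∑ i, ∫ ω, Q t ω i * (μ t ω i - A t ω i) ∂P := by
    rw [integral_finset_sum _ (fun i _ => hint i), Finset.mul_sum,
      ← Finset.sum_sub_distrib]
    refine Finset.sum_congr rfl (fun i _ => ?_)
    rw [integral_sub ((hsqint i).const_mul _) (hcrossint i), integral_const_mul]
  rw [h2] at h1
  linarith
end

section
/- Let R be Hermitian positive definite and h ∈ ℂ^N with e = 1 − h^H (R + h h^H)^{-1} h > 0. Then min_{α>0, u} [α(u^H(R + hh^H)u − 2Re(u^H h) + 1) − log α] = 1 + log e = 1 − log(1 + h^H R^{-1} h), establishing the equivalence between the rate log(1 + h^H R^{-1} h) and the optimized weighted MSE up to constants. -/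
open Matrix ComplexOrder

private lemma vecMulVec_mulVec' {N : ℕ} (a b x : Fin N → ℂ) :
    Matrix.vecMulVec a b *ᵥ x = (b ⬝ᵥ x) • a := by
  funext i
  simp [Matrix.vecMulVec, Matrix.mulVec, dotProduct, Finset.mul_sum, mul_comm,
    mul_left_comm]

private lemma star_dot_swap {N : ℕ} (a b : Fin N → ℂ) :
    (star a ⬝ᵥ b).re = (star b ⬝ᵥ a).re := by
  rw [Matrix.star_dotProduct]
  exact (Complex.star_def ▸ Complex.conj_re _)

theorem rate_wmmse_equivalence (N : ℕ) (R : Matrix (Fin N) (Fin N) ℂ) (hR : R.PosDef)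
    (h : Fin N → ℂ)
    (Rtot : Matrix (Fin N) (Fin N) ℂ)
    (hRtot : Rtot = R + Matrix.vecMulVec h (star h))
    (e : ℝ) (he : e = 1 - (star h ⬝ᵥ (Rtot⁻¹ *ᵥ h)).re) (hepos : 0 < e) :
    IsLeast { val : ℝ | ∃ (α : ℝ) (u : Fin N → ℂ), 0 < α ∧
        val = α * ((star u ⬝ᵥ (Rtot *ᵥ u)).re - 2 * (star u ⬝ᵥ h).re + 1) - Real.log α }
      (1 + Real.log e) ∧
    1 + Real.log e = 1 - Real.log (1 + (star h ⬝ᵥ (R⁻¹ *ᵥ h)).re) := by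
  -- Positive definiteness of Rtot
  have hvv : (Matrix.vecMulVec h (star h)).PosSemidef := by
    have := Matrix.posSemidef_conjTranspose_mul_self (Matrix.replicateRow (Fin 1) (star h))
    rw [Matrix.conjTranspose_replicateRow, star_star] at this
    rw [Matrix.vecMulVec_eq (Fin 1)]
    exact this
  have hRt : Rtot.PosDef := hRtot ▸ hR.add_posSemidef hvv
  have hdet : IsUnit Rtot.det := hRt.isUnit.map (Matrix.detMonoidHom)
  set u0 : Fin N → ℂ := Rtot⁻¹ *ᵥ h with hu0def
  have hu0 : Rtot *ᵥ u0 = h := by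
    rw [hu0def, Matrix.mulVec_mulVec, Matrix.mul_nonsing_inv _ hdet, Matrix.one_mulVec]
  -- quadratic lower bound : f u ≥ e for all u
  have hdot : (star u0 ⬝ᵥ h).re = (star h ⬝ᵥ u0).re := star_dot_swap u0 h
  have hf : ∀ u : Fin N → ℂ,
      e ≤ (star u ⬝ᵥ (Rtot *ᵥ u)).re - 2 * (star u ⬝ᵥ h).re + 1 := by
    intro u
    have h1 : star u0 ⬝ᵥ (Rtot *ᵥ u) = star (star u ⬝ᵥ h) := by
      rw [Matrix.star_dotProduct]
      congr 1
      rw [Matrix.star_mulVec, ← Matrix.dotProduct_mulVec, hRt.isHermitian.eq, hu0]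
    have key : star (u - u0) ⬝ᵥ (Rtot *ᵥ (u - u0)) =
        star u ⬝ᵥ (Rtot *ᵥ u) - star u ⬝ᵥ h - star (star u ⬝ᵥ h) + star u0 ⬝ᵥ h := by
      rw [star_sub, Matrix.mulVec_sub, sub_dotProduct, dotProduct_sub,
        dotProduct_sub, hu0, h1]
      ring
    have hq : 0 ≤ (star (u - u0) ⬝ᵥ (Rtot *ᵥ (u - u0))).re := by
      have := hRt.posSemidef.dotProduct_mulVec_nonneg (u - u0)
      rw [Complex.le_def] at this
      simpa using this.1
    rw [key] at hq
    simp only [Complex.add_re, Complex.sub_re, Complex.star_def, Complex.conj_re] at hq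
    rw [he, ← hdot]
    linarith
  -- value at the optimum
  have hfe : (star u0 ⬝ᵥ (Rtot *ᵥ u0)).re - 2 * (star u0 ⬝ᵥ h).re + 1 = e := by
    rw [hu0, he, ← hdot]; ring
  constructor
  · constructor
    · -- membership
      refine ⟨e⁻¹, u0, inv_pos.mpr hepos, ?_⟩
      rw [hfe, Real.log_inv, inv_mul_cancel₀ (ne_of_gt hepos)]
      ring
    · -- lower bound
      rintro v ⟨α, u, hα, rfl⟩
      have h2 : α * e ≤ α * ((star u ⬝ᵥ (Rtot *ᵥ u)).re - 2 * (star u ⬝ᵥ h).re + 1) :=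
        mul_le_mul_of_nonneg_left (hf u) hα.le
      have h3 : Real.log (α * e) ≤ α * e - 1 :=
        Real.log_le_sub_one_of_pos (mul_pos hα hepos)
      rw [Real.log_mul (ne_of_gt hα) (ne_of_gt hepos)] at h3
      linarith
  · -- Sherman-Morrison identity
    set s : ℂ := star h ⬝ᵥ (R⁻¹ *ᵥ h) with hsdef
    have hs0 : 0 ≤ s := hR.inv.posSemidef.dotProduct_mulVec_nonneg h
    rw [Complex.le_def] at hs0
    have hsim : s.im = 0 := hs0.2.symm
    have hsre : 0 ≤ s.re := by simpa using hs0.1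
    have hsreal : s = (s.re : ℂ) := by
      exact Complex.ext rfl (by simpa using hsim)
    have hc : (1 : ℂ) + s ≠ 0 := by
      rw [hsreal, ← Complex.ofReal_one, ← Complex.ofReal_add]
      exact_mod_cast (by positivity : (1 : ℝ) + s.re ≠ 0)
    have hRdet : IsUnit R.det := hR.isUnit.map (Matrix.detMonoidHom)
    have hw : R *ᵥ (R⁻¹ *ᵥ h) = h := by
      rw [Matrix.mulVec_mulVec, Matrix.mul_nonsing_inv _ hRdet, Matrix.one_mulVec]
    have hmain : Rtot *ᵥ (((1 : ℂ) + s)⁻¹ • (R⁻¹ *ᵥ h)) = h := by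
      rw [Matrix.mulVec_smul, hRtot, Matrix.add_mulVec, hw, vecMulVec_mulVec', ← hsdef]
      have : h + s • h = ((1 : ℂ) + s) • h := by rw [add_smul, one_smul]
      rw [this, smul_smul, inv_mul_cancel₀ hc, one_smul]
    have hueq : u0 = ((1 : ℂ) + s)⁻¹ • (R⁻¹ *ᵥ h) := by
      have := congrArg (fun x => Rtot⁻¹ *ᵥ x) hmain
      rw [Matrix.mulVec_mulVec, Matrix.nonsing_inv_mul _ hdet, Matrix.one_mulVec] at this
      rw [hu0def, ← this]
    have hdots : star h ⬝ᵥ u0 = ((1 : ℂ) + s)⁻¹ * s := by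
      rw [hueq, dotProduct_smul, ← hsdef, smul_eq_mul]
    have hee : e = (1 + s.re)⁻¹ := by
      rw [he, hdots, hsreal]
      have : (((1 : ℂ) + (s.re : ℂ))⁻¹ * (s.re : ℂ)) = ((((1 + s.re)⁻¹ * s.re : ℝ)) : ℂ) := by
        push_cast; ring
      rw [this, Complex.ofReal_re]
      have h1 : (0:ℝ) < 1 + s.re := by positivity
      field_simp
      rw [Complex.ofReal_re, div_self (ne_of_gt h1)]
      ring
    rw [hee, Real.log_inv]
    ring
end
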